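/- Let $f \in k[[x_1,\dots,x_n]]$ be a nonzero formal power series. Then the function $w \mapsto \nu_w(f)$ on $\mathbb{R}_{\ge 0}^n$, where $\nu_w(\sum_\alpha a_\alpha x^\alpha) = \min\{w\cdot\alpha : a_\alpha \ne 0\}$, is concave, continuous, and on any compact subset is the minimum of finitely many linear functions $w \mapsto w\cdot\alpha$ with integer $\alpha$. -/

import Mathlib

noncomputable def mvalSeries {k : Type*} [Field k] {n : ℕ}
    (f : MvPowerSeries (Fin n) k) (w : Fin n → ℝ) : ℝ :=
  sInf {x : ℝ | ∃ α : Fin n →₀ ℕ, MvPowerSeries.coeff α f ≠ 0 ∧ x = ∑ i, w i * (α i : ℝ)}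

section Aux

variable {k : Type*} [Field k] {n : ℕ}

lemma exists_basis (f : MvPowerSeries (Fin n) k) (hf : f ≠ 0) :
    ∃ S : Finset (Fin n →₀ ℕ), S.Nonempty ∧
      (∀ α ∈ S, MvPowerSeries.coeff α f ≠ 0) ∧
      ∀ α : Fin n →₀ ℕ, MvPowerSeries.coeff α f ≠ 0 → ∃ β ∈ S, β ≤ α := by
  set T : Set (Fin n →₀ ℕ) := {α | MvPowerSeries.coeff α f ≠ 0} with hTdef
  have hTne : T.Nonempty := by
    by_contra h
    push_neg at h
    apply hf
    ext α
    have : α ∉ T := by rw [h]; exact Set.notMem_empty α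
    simpa [T] using this
  set M : Set (Fin n →₀ ℕ) := {a ∈ T | ∀ b ∈ T, b ≤ a → b = a} with hMdef
  have hpwo : T.IsPWO := Set.isPWO_of_wellQuasiOrderedLE T
  have hanti : IsAntichain (· ≤ ·) M := by
    intro a ha b hb hne hab
    exact hne (hb.2 a ha.1 hab)
  have hMfin : M.Finite :=
    hanti.finite_of_partiallyWellOrderedOn (hpwo.mono (fun a ha => ha.1))
  have hdom : ∀ α ∈ T, ∃ β ∈ M, β ≤ α := by
    intro α hα
    set s : Set (Fin n →₀ ℕ) := {β ∈ T | β ≤ α} with hsdef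
    have hsWF : s.IsWF := (hpwo.isWF).subset (fun b hb => hb.1)
    have hsne : s.Nonempty := ⟨α, hα, le_refl α⟩
    refine ⟨hsWF.min hsne, ⟨(hsWF.min_mem hsne).1, ?_⟩, (hsWF.min_mem hsne).2⟩
    intro b hb hble
    have hbs : b ∈ s := ⟨hb, hble.trans (hsWF.min_mem hsne).2⟩
    have hnlt := hsWF.not_lt_min hsne hbs
    rcases hble.lt_or_eq with h' | h'
    · exact absurd h' hnlt
    · exact h'
  refine ⟨hMfin.toFinset, ?_, ?_, ?_⟩
  · obtain ⟨α, hα⟩ := hTne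
    obtain ⟨β, hβ, -⟩ := hdom α hα
    exact ⟨β, hMfin.mem_toFinset.mpr hβ⟩
  · intro α hα
    exact (hMfin.mem_toFinset.mp hα).1
  · intro α hα
    obtain ⟨β, hβ, hle⟩ := hdom α hα
    exact ⟨β, hMfin.mem_toFinset.mpr hβ, hle⟩

lemma mval_eq_inf' (f : MvPowerSeries (Fin n) k)
    {S : Finset (Fin n →₀ ℕ)} (hS : S.Nonempty)
    (hSsupp : ∀ α ∈ S, MvPowerSeries.coeff α f ≠ 0)
    (hSdom : ∀ α : Fin n →₀ ℕ, MvPowerSeries.coeff α f ≠ 0 → ∃ β ∈ S, β ≤ α)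
    (w : Fin n → ℝ) (hw : ∀ i, 0 ≤ w i) :
    mvalSeries f w = S.inf' hS (fun α => ∑ i, w i * (α i : ℝ)) := by
  set A : Set ℝ :=
    {x : ℝ | ∃ α : Fin n →₀ ℕ, MvPowerSeries.coeff α f ≠ 0 ∧ x = ∑ i, w i * (α i : ℝ)}
    with hAdef
  have hAbdd : BddBelow A := by
    refine ⟨0, fun x hx => ?_⟩
    obtain ⟨α, -, rfl⟩ := hx
    exact Finset.sum_nonneg fun i _ => mul_nonneg (hw i) (Nat.cast_nonneg _)
  have hAne : A.Nonempty := by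
    obtain ⟨β, hβ⟩ := hS
    exact ⟨_, β, hSsupp β hβ, rfl⟩
  apply le_antisymm
  · obtain ⟨β, hβS, hβeq⟩ := S.exists_mem_eq_inf' hS (fun α => ∑ i, w i * (α i : ℝ))
    rw [mvalSeries, hβeq]
    exact csInf_le hAbdd ⟨β, hSsupp β hβS, rfl⟩
  · apply le_csInf hAne
    rintro x ⟨α, hα, rfl⟩
    obtain ⟨β, hβS, hβle⟩ := hSdom α hα
    refine le_trans (Finset.inf'_le _ hβS) ?_
    exact Finset.sum_le_sum fun i _ =>
      mul_le_mul_of_nonneg_left (Nat.cast_le.mpr (hβle i)) (hw i)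

end Aux

theorem stmt_2 {k : Type*} [Field k] {n : ℕ} (f : MvPowerSeries (Fin n) k)
    (hf : f ≠ 0) :
    (∀ w w' : Fin n → ℝ, (∀ i, 0 ≤ w i) → (∀ i, 0 ≤ w' i) →
      ∀ t : ℝ, 0 ≤ t → t ≤ 1 →
        t * mvalSeries f w + (1 - t) * mvalSeries f w' ≤
          mvalSeries f (fun i => t * w i + (1 - t) * w' i)) ∧
    ContinuousOn (mvalSeries f) {w : Fin n → ℝ | ∀ i, 0 ≤ w i} ∧
    (∀ K : Set (Fin n → ℝ), IsCompact K → K ⊆ {w | ∀ i, 0 ≤ w i} →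
      ∃ S : Finset (Fin n →₀ ℕ), S.Nonempty ∧
        (∀ α ∈ S, MvPowerSeries.coeff α f ≠ 0) ∧
        ∀ w ∈ K, mvalSeries f w =
          sInf ((fun α : Fin n →₀ ℕ => ∑ i, w i * (α i : ℝ)) '' (S : Set (Fin n →₀ ℕ)))) := by
  obtain ⟨S, hS, hSsupp, hSdom⟩ := exists_basis f hf
  have key := mval_eq_inf' f hS hSsupp hSdom
  refine ⟨?_, ?_, ?_⟩
  · intro w w' hw hw' t ht ht1
    have hcomb : ∀ i, 0 ≤ t * w i + (1 - t) * w' i := fun i =>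
      add_nonneg (mul_nonneg ht (hw i)) (mul_nonneg (by linarith) (hw' i))
    rw [key w hw, key w' hw', key _ hcomb]
    apply Finset.le_inf'
    intro β hβ
    have h1 : S.inf' hS (fun α => ∑ i, w i * (α i : ℝ)) ≤ ∑ i, w i * (β i : ℝ) :=
      Finset.inf'_le _ hβ
    have h2 : S.inf' hS (fun α => ∑ i, w' i * (α i : ℝ)) ≤ ∑ i, w' i * (β i : ℝ) :=
      Finset.inf'_le _ hβ
    have heq : ∑ i, (t * w i + (1 - t) * w' i) * (β i : ℝ)
        = t * ∑ i, w i * (β i : ℝ) + (1 - t) * ∑ i, w' i * (β i : ℝ) := by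
      rw [Finset.mul_sum, Finset.mul_sum, ← Finset.sum_add_distrib]
      congr 1
      ext i
      ring
    rw [heq]
    have := mul_le_mul_of_nonneg_left h1 ht
    have := mul_le_mul_of_nonneg_left h2 (by linarith : (0:ℝ) ≤ 1 - t)
    linarith
  · have hcont : Continuous fun w : Fin n → ℝ =>
        S.inf' hS (fun α => ∑ i, w i * (α i : ℝ)) := by
      apply Continuous.finset_inf'_apply hS
      intro α hα
      exact continuous_finset_sum _ fun i _ => (continuous_apply i).mul continuous_const
    exact (hcont.continuousOn).congr fun w hw => key w hw
  · intro K hK hKsub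
    refine ⟨S, hS, hSsupp, fun w hw => ?_⟩
    rw [key w (hKsub hw), Finset.inf'_eq_csInf_image]
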